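/- If A is a matrix all of whose rows are pairwise distinct unbordered strings of the same length s from a cross bifix-free set, and the first and last rows of A are distinct and do not occur as inner rows, then A is self non-overlapping: the only block partitions of A with a common block satisfying the frame condition is the trivial one where the block is A itself. -/

import Mathlib

/-- The four sides (borders) of a matrix: top, bottom, left, right. -/
inductive Side | top | bottom | left | right
  deriving DecidableEq

/-- A matrix over an alphabet `α`, with `rows × cols` relevant entries. -/
structure Mat (α : Type*) where
  rows : ℕ
  cols : ℕ
  entry : ℕ → ℕ → α

namespace Mat

/-- The `i`-th row of a matrix, as a string (list) of length `cols`. -/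
def row {α : Type*} (A : Mat α) (i : ℕ) : List α :=
  (List.range A.cols).map (fun j => A.entry i j)

/-- Two matrices have the same content (same dimensions and same in-range entries). -/
def Same {α : Type*} (A B : Mat α) : Prop :=
  A.rows = B.rows ∧ A.cols = B.cols ∧
    ∀ i j, i < A.rows → j < A.cols → A.entry i j = B.entry i j

end Mat

/-- A cut sequence partitioning `[0, m)` into `h` nonempty consecutive intervals. -/
def IsCuts (m h : ℕ) (r : Fin (h+1) → ℕ) : Prop :=
  r 0 = 0 ∧ r (Fin.last h) = m ∧ StrictMono r

/-- The frame of block `(i,j)` in a block partition with `h` block-rows and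
`k` block-columns: which borders of the full matrix the block touches. -/
def frame (i h j k : ℕ) : Set Side :=
  {s | (s = Side.top ∧ i = 0) ∨ (s = Side.bottom ∧ i = h - 1) ∨
       (s = Side.left ∧ j = 0) ∨ (s = Side.right ∧ j = k - 1)}

/-- A witness that matrices `A` and `B` overlap via block partitions of `A`
(with `h × k` blocks) and of `B` (with `h' × k'` blocks): a common block
`A_{ij} = B_{i'j'}` whose frames jointly cover `{t,b,l,r}`. -/
structure OverlapWitness {α : Type*} (A B : Mat α) (h k h' k' : ℕ) : Type where
  r : Fin (h+1) → ℕ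
  c : Fin (k+1) → ℕ
  r' : Fin (h'+1) → ℕ
  c' : Fin (k'+1) → ℕ
  cutsR : IsCuts A.rows h r
  cutsC : IsCuts A.cols k c
  cutsR' : IsCuts B.rows h' r'
  cutsC' : IsCuts B.cols k' c'
  i : Fin h
  j : Fin k
  i' : Fin h'
  j' : Fin k'
  sameHeight : r i.succ - r i.castSucc = r' i'.succ - r' i'.castSucc
  sameWidth : c j.succ - c j.castSucc = c' j'.succ - c' j'.castSucc
  blockEq : ∀ x y, x < r i.succ - r i.castSucc → y < c j.succ - c j.castSucc →
      A.entry (r i.castSucc + x) (c j.castSucc + y)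
        = B.entry (r' i'.castSucc + x) (c' j'.castSucc + y)
  frames : frame i.val h j.val k ∪ frame i'.val h' j'.val k' = Set.univ

/-- `A` and `B` are overlapping matrices. -/
def Overlap {α : Type*} (A B : Mat α) : Prop :=
  ∃ h k h' k', Nonempty (OverlapWitness A B h k h' k')

/-- `A` and `B` are strong non-overlapping matrices. -/
def StrongNonOverlappingMat {α : Type*} (A B : Mat α) : Prop := ¬ Overlap A B

/-- `A` is self non-overlapping: the only overlap of `A` with itself is the
trivial one where the common block is `A` itself. -/
def SelfNonOverlapping {α : Type*} (A : Mat α) : Prop :=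
  ∀ h k h' k' (w : OverlapWitness A A h k h' k'),
    w.r w.i.succ - w.r w.i.castSucc = A.rows ∧
    w.c w.j.succ - w.c w.j.castSucc = A.cols

/-- `Borders v w`: some nonempty proper prefix of `v` equals a proper suffix of `w`. -/
def Borders {α : Type*} (v w : List α) : Prop :=
  ∃ p : List α, p ≠ [] ∧ p <+: v ∧ p ≠ v ∧ p <:+ w ∧ p ≠ w

/-- A string is unbordered (self non-overlapping / bifix-free). -/
def Unbordered {α : Type*} (v : List α) : Prop := ¬ Borders v v

/-- Two strings are non-overlapping (cross bifix-free): no nonempty proper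
prefix of one equals a proper suffix of the other. -/
def NonOverlappingStr {α : Type*} (v w : List α) : Prop :=
  ¬ Borders v w ∧ ¬ Borders w v

/-- `v` occurs as an inner factor of `w`: `w = a ++ v ++ b` with `a, b` not both empty. -/
def InnerFactor {α : Type*} (v w : List α) : Prop :=
  ∃ a b : List α, (a ≠ [] ∨ b ≠ []) ∧ w = a ++ v ++ b

/-- Two strings are strong non-overlapping. -/
def StrongNonOverlappingStr {α : Type*} (v w : List α) : Prop :=
  NonOverlappingStr v w ∧ ¬ InnerFactor v w ∧ ¬ InnerFactor w v

/-- A strong non-overlapping set of strings. -/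
def SNOSet {α : Type*} (W : Set (List α)) : Prop :=
  ∀ v ∈ W, ∀ w ∈ W, StrongNonOverlappingStr v w


section Aux

variable {α : Type*}

lemma cuts_lt {m h : ℕ} {r : Fin (h+1) → ℕ} (hc : IsCuts m h r) (i : Fin h) :
    r i.castSucc < r i.succ := hc.2.2 Fin.castSucc_lt_succ

lemma cuts_le {m h : ℕ} {r : Fin (h+1) → ℕ} (hc : IsCuts m h r) (i : Fin h) :
    r i.succ ≤ m := by
  have := hc.2.2.monotone (Fin.le_last i.succ)
  rw [hc.2.1] at this
  exact this

lemma cuts_zero_of_val {m h : ℕ} {r : Fin (h+1) → ℕ} (hc : IsCuts m h r) (i : Fin h)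
    (hi : i.val = 0) : r i.castSucc = 0 := by
  have : i.castSucc = (0 : Fin (h+1)) := by
    ext; simpa using hi
  rw [this, hc.1]

lemma cuts_last_of_val {m h : ℕ} {r : Fin (h+1) → ℕ} (hc : IsCuts m h r) (i : Fin h)
    (hi : i.val = h - 1) : r i.succ = m := by
  have hh : 0 < h := i.pos
  have : i.succ = Fin.last h := by
    ext; simp [Fin.val_succ, hi]; omega
  rw [this, hc.2.1]

lemma row_length (A : Mat α) (a : ℕ) : (A.row a).length = A.cols := by
  simp [Mat.row]

lemma row_getElem (A : Mat α) (a n : ℕ) (hn : n < A.cols) :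
    (A.row a)[n]'(by simpa [row_length] using hn) = A.entry a n := by
  simp [Mat.row]

lemma seg_prefix (A : Mat α) (a s W : ℕ) (h0 : s = 0) (hW : W ≤ A.cols) :
    (List.range W).map (fun y => A.entry a (s + y)) <+: A.row a := by
  subst h0
  have : (List.range W).map (fun y => A.entry a (0 + y)) = (A.row a).take W := by
    apply List.ext_getElem
    · simp [Mat.row]; omega
    · intro n h1 h2
      simp [Mat.row]
  rw [this]; exact List.take_prefix _ _

lemma seg_suffix (A : Mat α) (a s W : ℕ) (hs : s + W = A.cols) :
    (List.range W).map (fun y => A.entry a (s + y)) <:+ A.row a := by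
  have : (List.range W).map (fun y => A.entry a (s + y)) = (A.row a).drop s := by
    apply List.ext_getElem
    · simp [Mat.row]; omega
    · intro n h1 h2
      simp [Mat.row]
  rw [this]; exact List.drop_suffix _ _

lemma seg_length (A : Mat α) (a s W : ℕ) :
    ((List.range W).map (fun y => A.entry a (s + y))).length = W := by simp

end Aux

/-- If all rows of A are pairwise distinct unbordered strings from a cross
bifix-free set, and the first and last rows are distinct and do not occur as
inner rows, then A is self non-overlapping: the only overlap of A with itself
is the trivial one where the common block is A itself. -/
theorem stmt15 {α : Type*} (A : Mat α) (hr : 0 < A.rows) (hc : 0 < A.cols)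
    (hub : ∀ i, i < A.rows → Unbordered (A.row i))
    (hcbf : ∀ i j, i < A.rows → j < A.rows → ¬ Borders (A.row i) (A.row j))
    (hdist : ∀ i j, i < A.rows → j < A.rows → i ≠ j → A.row i ≠ A.row j)
    (hfl : A.row 0 ≠ A.row (A.rows - 1))
    (hinner : ∀ i, 0 < i → i < A.rows - 1 →
      A.row i ≠ A.row 0 ∧ A.row i ≠ A.row (A.rows - 1)) :
    SelfNonOverlapping A := by
  intro h k h' k' w
  -- abbreviations
  set ri := w.r w.i.castSucc with hri
  set ri1 := w.r w.i.succ with hri1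
  set ri' := w.r' w.i'.castSucc with hri'
  set ri1' := w.r' w.i'.succ with hri1'
  set cj := w.c w.j.castSucc with hcj
  set cj1 := w.c w.j.succ with hcj1
  set cj' := w.c' w.j'.castSucc with hcj'
  set cj1' := w.c' w.j'.succ with hcj1'
  have hrlt : ri < ri1 := cuts_lt w.cutsR w.i
  have hrle : ri1 ≤ A.rows := cuts_le w.cutsR w.i
  have hrlt' : ri' < ri1' := cuts_lt w.cutsR' w.i'
  have hrle' : ri1' ≤ A.rows := cuts_le w.cutsR' w.i'
  have hclt : cj < cj1 := cuts_lt w.cutsC w.j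
  have hcle : cj1 ≤ A.cols := cuts_le w.cutsC w.j
  have hclt' : cj' < cj1' := cuts_lt w.cutsC' w.j'
  have hcle' : cj1' ≤ A.cols := cuts_le w.cutsC' w.j'
  have hH : ri1 - ri = ri1' - ri' := w.sameHeight
  have hW : cj1 - cj = cj1' - cj' := w.sameWidth
  -- frame conditions
  have hsides : ∀ s : Side, s ∈ frame w.i.val h w.j.val k ∪ frame w.i'.val h' w.j'.val k' := by
    intro s
    rw [w.frames]; exact Set.mem_univ s
  have htop : w.i.val = 0 ∨ w.i'.val = 0 := by
    rcases hsides Side.top with hs | hs <;> simp [frame] at hs <;> tauto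
  have hbot : w.i.val = h - 1 ∨ w.i'.val = h' - 1 := by
    rcases hsides Side.bottom with hs | hs <;> simp [frame] at hs <;> tauto
  have hleft : w.j.val = 0 ∨ w.j'.val = 0 := by
    rcases hsides Side.left with hs | hs <;> simp [frame] at hs <;> tauto
  have hright : w.j.val = k - 1 ∨ w.j'.val = k' - 1 := by
    rcases hsides Side.right with hs | hs <;> simp [frame] at hs <;> tauto
  have hrowa : ri < A.rows := lt_of_lt_of_le hrlt hrle
  have hrowa' : ri' < A.rows := lt_of_lt_of_le hrlt' hrle'
  -- the common segment, seen from both sides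
  have hsegeq : (List.range (cj1 - cj)).map (fun y => A.entry ri (cj + y))
      = (List.range (cj1 - cj)).map (fun y => A.entry ri' (cj' + y)) := by
    apply List.map_congr_left
    intro y hy
    rw [List.mem_range] at hy
    have := w.blockEq 0 y (by omega) hy
    simpa using this
  -- Step 1: the block has full width
  have hWfull : cj1 - cj = A.cols := by
    by_contra hne
    have hWlt : cj1 - cj < A.cols := by omega
    rcases hleft with hj0 | hj0 <;> rcases hright with hjk | hjk
    · -- j = 0 and j = k-1 : width is cols, contradiction
      have h0 : cj = 0 := cuts_zero_of_val w.cutsC w.j hj0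
      have h1 : cj1 = A.cols := cuts_last_of_val w.cutsC w.j hjk
      omega
    · -- j = 0, j' = k'-1 : prefix of row ri, suffix of row ri'
      have h0 : cj = 0 := cuts_zero_of_val w.cutsC w.j hj0
      have h1 : cj1' = A.cols := cuts_last_of_val w.cutsC' w.j' hjk
      apply hcbf ri ri' hrowa hrowa'
      refine ⟨(List.range (cj1 - cj)).map (fun y => A.entry ri (cj + y)), ?_, ?_, ?_, ?_, ?_⟩
      · simp; omega
      · exact seg_prefix A ri cj (cj1 - cj) h0 (by omega)
      · intro hcon
        have := congrArg List.length hcon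
        rw [seg_length, row_length] at this; omega
      · rw [hsegeq]
        exact seg_suffix A ri' cj' (cj1 - cj) (by omega)
      · intro hcon
        have := congrArg List.length hcon
        rw [seg_length, row_length] at this; omega
    · -- j' = 0, j = k-1 : suffix of row ri, prefix of row ri'
      have h0 : cj' = 0 := cuts_zero_of_val w.cutsC' w.j' hj0
      have h1 : cj1 = A.cols := cuts_last_of_val w.cutsC w.j hjk
      apply hcbf ri' ri hrowa' hrowa
      refine ⟨(List.range (cj1 - cj)).map (fun y => A.entry ri (cj + y)), ?_, ?_, ?_, ?_, ?_⟩
      · simp; omega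
      · rw [hsegeq]
        exact seg_prefix A ri' cj' (cj1 - cj) h0 (by omega)
      · intro hcon
        have := congrArg List.length hcon
        rw [seg_length, row_length] at this; omega
      · exact seg_suffix A ri cj (cj1 - cj) (by omega)
      · intro hcon
        have := congrArg List.length hcon
        rw [seg_length, row_length] at this; omega
    · -- j' = 0 and j' = k'-1
      have h0 : cj' = 0 := cuts_zero_of_val w.cutsC' w.j' hj0
      have h1 : cj1' = A.cols := cuts_last_of_val w.cutsC' w.j' hjk
      omega
  refine ⟨?_, hWfull⟩
  -- Step 2: full width means blocks consist of whole rows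
  have hcj0 : cj = 0 := by omega
  have hcj0' : cj' = 0 := by omega
  -- rows inside the block coincide
  have hroweq : ∀ x, x < ri1 - ri → A.row (ri + x) = A.row (ri' + x) := by
    intro x hx
    apply List.ext_getElem (by simp [row_length])
    intro n h1 h2
    rw [row_length] at h1
    rw [row_getElem A _ n h1, row_getElem A _ n h1]
    have := w.blockEq x n hx (by omega)
    have h3 : w.c w.j.castSucc = 0 := hcj0
    have h4 : w.c' w.j'.castSucc = 0 := hcj0'
    rw [h3, h4] at this
    simpa using this
  have hsame : ri = ri' := by
    have h0 := hroweq 0 (by omega)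
    simp only [Nat.add_zero] at h0
    by_contra hne
    exact hdist ri ri' hrowa hrowa' hne h0
  -- top side: the block starts at row 0
  have hstart : ri = 0 := by
    rcases htop with hi0 | hi0
    · exact cuts_zero_of_val w.cutsR w.i hi0
    · rw [hsame]; exact cuts_zero_of_val w.cutsR' w.i' hi0
  -- bottom side: the block ends at the last row
  rcases hbot with hih | hih
  · have := cuts_last_of_val w.cutsR w.i hih
    omega
  · have := cuts_last_of_val w.cutsR' w.i' hih
    omega
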